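/- Let n be an odd positive integer and let ξ_1, …, ξ_n be positive real numbers satisfying, for all 1 ≤ i ≤ n (cyclic indices), ξ_i + ξ_{i+3} + ξ_{i+5} + ⋯ + ξ_{i+n−2} ≤ ξ_{i+1} + ξ_{i+2} + ξ_{i+4} + ⋯ + ξ_{i+n−1}. Then there exists a real skew-symmetric n×n matrix A = [a_i^j] such that ∑_{i=1}^n (a_i^j)² = ξ_j for all 1 ≤ j ≤ n. -/

import Mathlib

/-- The cyclic inequalities
`ξ_i + ξ_{i+3} + ξ_{i+5} + ⋯ + ξ_{i+n−2} ≤ ξ_{i+1} + ξ_{i+2} + ξ_{i+4} + ⋯ + ξ_{i+n−1}`: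
the left sum runs over offsets `{0, 3, 5, …, n−2}`, the right over
`{1, 2, 4, …, n−1}`. -/
def CycIneq (n : ℕ) (ξ : ZMod n → ℝ) : Prop :=
  ∀ i : ZMod n,
    ∑ t ∈ (Finset.range n).filter (fun t => t = 0 ∨ (Odd t ∧ t ≠ 1)),
        ξ (i + (t : ZMod n)) ≤
    ∑ t ∈ (Finset.range n).filter (fun t => t = 1 ∨ (Even t ∧ t ≠ 0)),
        ξ (i + (t : ZMod n))

/-- for odd `n` and positive `ξ_1, …, ξ_n` satisfying the cyclic
inequalities, there is a real skew-symmetric `n × n` matrix `A` whose columns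
have squared-norm column sums `∑ i, (a_i^j)² = ξ_j`. -/
theorem exists_skew_symmetric_with_column_square_sums
    (n : ℕ) [NeZero n] (hn : Odd n) (ξ : ZMod n → ℝ)
    (hpos : ∀ i, 0 < ξ i) (hineq : CycIneq n ξ) :
    ∃ A : Matrix (ZMod n) (ZMod n) ℝ, A.transpose = -A ∧
      ∀ j : ZMod n, ∑ i : ZMod n, (A i j) ^ 2 = ξ j := by
  classical
  -- dispose of the case `n = 1`
  rcases eq_or_lt_of_le (Nat.one_le_iff_ne_zero.mpr (NeZero.ne n)) with h1 | h1
  · exfalso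
    have h := hineq 0
    simp [← h1, Finset.range_one, Finset.filter_singleton] at h
    exact absurd h (not_le.mpr (hpos 0))
  have hn3 : 3 ≤ n := by
    rcases hn with ⟨k, hk⟩; omega
  have h2ne : (2 : ZMod n) ≠ 0 := by
    have : ((2 : ℕ) : ZMod n) ≠ 0 := by
      rw [Ne, ZMod.natCast_eq_zero_iff]
      intro h
      have := Nat.le_of_dvd (by norm_num) h
      omega
    simpa using this
  -- the alternating sums
  set S : ZMod n → ℝ := fun c => ∑ t ∈ Finset.range n, (-1 : ℝ) ^ t * ξ (c + (t : ZMod n))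
    with hSdef
  -- the key recurrence `S c + S (c+1) = 2 ξ c`
  have hS : ∀ c : ZMod n, S c + S (c + 1) = 2 * ξ c := by
    intro c
    have e1 : ∑ t ∈ Finset.range (n + 1), (-1 : ℝ) ^ t * ξ (c + (t : ZMod n))
        = S c + (-1 : ℝ) ^ n * ξ (c + (n : ZMod n)) := Finset.sum_range_succ _ n
    have e2 : ∑ t ∈ Finset.range (n + 1), (-1 : ℝ) ^ t * ξ (c + (t : ZMod n))
        = (∑ t ∈ Finset.range n, (-1 : ℝ) ^ (t + 1) * ξ (c + ((t + 1 : ℕ) : ZMod n)))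
          + (-1 : ℝ) ^ 0 * ξ (c + ((0 : ℕ) : ZMod n)) := Finset.sum_range_succ' _ n
    have e3 : ∑ t ∈ Finset.range n, (-1 : ℝ) ^ (t + 1) * ξ (c + ((t + 1 : ℕ) : ZMod n))
        = - S (c + 1) := by
      rw [hSdef, ← Finset.sum_neg_distrib]
      refine Finset.sum_congr rfl fun t _ => ?_
      have : (c + ((t + 1 : ℕ) : ZMod n)) = (c + 1 + (t : ZMod n)) := by
        push_cast; ring
      rw [this, pow_succ]
      ring
    have hne : (-1 : ℝ) ^ n = -1 := Odd.neg_one_pow hn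
    have hcn : (c + (n : ZMod n)) = c := by
      rw [ZMod.natCast_self]; ring
    rw [e3] at e2
    rw [hne, hcn] at e1
    have h0 : (c + ((0 : ℕ) : ZMod n)) = c := by push_cast; ring
    rw [h0] at e2
    have := e1.symm.trans e2
    nlinarith [this]
  -- nonnegativity of `S` from the cyclic inequalities
  have hSnn : ∀ c : ZMod n, 0 ≤ S c := by
    intro c
    set i : ZMod n := c - 2 with hidef
    set P : ℕ → Prop := fun t => t = 0 ∨ (Odd t ∧ t ≠ 1) with hPdef
    set Q : ℕ → Prop := fun t => t = 1 ∨ (Even t ∧ t ≠ 0) with hQdef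
    have hPQ : ∀ t, Q t ↔ ¬ P t := by
      intro t
      simp only [hPdef, hQdef, Nat.odd_iff, Nat.even_iff]
      omega
    -- reindex the alternating sum by the rotation `t ↦ t + 2 (mod n)`
    have key : S c = ∑ s ∈ Finset.range n,
        (if P s then (-1 : ℝ) else 1) * ξ (i + (s : ZMod n)) := by
      rw [hSdef]
      refine Finset.sum_nbij' (fun t => if n ≤ t + 2 then t + 2 - n else t + 2)
        (fun s => if s < 2 then s + n - 2 else s - 2) ?_ ?_ ?_ ?_ ?_
      · intro t ht
        simp only [Finset.mem_range] at ht ⊢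
        split_ifs <;> omega
      · intro s hs
        simp only [Finset.mem_range] at hs ⊢
        split_ifs <;> omega
      · intro t ht
        simp only [Finset.mem_range] at ht
        beta_reduce
        split_ifs <;> omega
      · intro s hs
        simp only [Finset.mem_range] at hs
        beta_reduce
        split_ifs <;> omega
      · intro t ht
        simp only [Finset.mem_range] at ht
        have hcast : (((if n ≤ t + 2 then t + 2 - n else t + 2 : ℕ)) : ZMod n)
            = ((t + 2 : ℕ) : ZMod n) := by
          split_ifs with h
          · rw [Nat.cast_sub h, ZMod.natCast_self, sub_zero]
          · rfl
        have harg : i + (((if n ≤ t + 2 then t + 2 - n else t + 2 : ℕ)) : ZMod n)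
            = c + (t : ZMod n) := by
          rw [hcast, hidef]
          push_cast
          ring
        have hodd : P (if n ≤ t + 2 then t + 2 - n else t + 2) ↔ Odd t := by
          rcases hn with ⟨k, hk⟩
          simp only [hPdef]
          split_ifs with h <;> simp only [Nat.odd_iff, false_or] <;> omega
        rw [harg]
        by_cases h : Odd t
        · rw [if_pos (hodd.mpr h), h.neg_one_pow]
        · rw [if_neg (fun hp => h (hodd.mp hp)),
            (Nat.not_odd_iff_even.mp h).neg_one_pow]
    have hsplit : ∑ s ∈ Finset.range n,
        (if P s then (-1 : ℝ) else 1) * ξ (i + (s : ZMod n))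
        = (∑ s ∈ (Finset.range n).filter Q, ξ (i + (s : ZMod n)))
          - (∑ s ∈ (Finset.range n).filter P, ξ (i + (s : ZMod n))) := by
      have : ∀ s, (if P s then (-1 : ℝ) else 1) * ξ (i + (s : ZMod n))
          = (if P s then -ξ (i + (s : ZMod n)) else ξ (i + (s : ZMod n))) := by
        intro s; split_ifs <;> ring
      rw [Finset.sum_congr rfl (fun s _ => this s), Finset.sum_ite]
      have hfilter : (Finset.range n).filter (fun s => ¬ P s)
          = (Finset.range n).filter Q := by
        refine Finset.filter_congr fun s _ => ?_
        simp [hPQ s]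
      rw [hfilter, Finset.sum_neg_distrib]
      ring
    have := hineq i
    rw [key, hsplit]
    simpa [hPdef, hQdef] using sub_nonneg.mpr this
  -- the matrix
  have h1ne : (1 : ZMod n) ≠ 0 := by
    intro h
    have : (2 : ZMod n) = 0 := by rw [show (2 : ZMod n) = 1 + 1 by norm_num, h]; ring
    exact h2ne this
  refine ⟨fun p q => if p = q + 1 then -Real.sqrt (S (q + 1) / 2)
      else if q = p + 1 then Real.sqrt (S (p + 1) / 2) else 0, ?_, ?_⟩
  · ext p q
    change (if q = p + 1 then -Real.sqrt (S (p + 1) / 2)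
        else if p = q + 1 then Real.sqrt (S (q + 1) / 2) else 0)
      = -(if p = q + 1 then -Real.sqrt (S (q + 1) / 2)
        else if q = p + 1 then Real.sqrt (S (p + 1) / 2) else 0)
    by_cases h1 : q = p + 1 <;> by_cases h2 : p = q + 1
    · exfalso
      rw [h2] at h1
      have : (2 : ZMod n) = 0 := by
        have := (add_right_inj q).mp (show q + 0 = q + 2 by
          nth_rewrite 1 [← add_zero q] at h1; linear_combination h1)
        exact this.symm
      exact h2ne this
    · rw [if_pos h1, if_pos h1, if_neg h2]
    · rw [if_neg h1, if_pos h2, if_pos h2, neg_neg]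
    · rw [if_neg h1, if_neg h2, if_neg h2, if_neg h1, neg_zero]
  · intro j
    have hne : j + 1 ≠ j - 1 := by
      intro h
      apply h2ne
      have : (2 : ZMod n) = (j + 1) - (j - 1) := by ring
      rw [this, h]; ring
    rw [Finset.sum_eq_add_of_mem (j + 1) (j - 1) (Finset.mem_univ _) (Finset.mem_univ _) hne ?_]
    · beta_reduce
      have hA1 : (if j + 1 = j + 1 then -Real.sqrt (S (j + 1) / 2)
          else if j = (j + 1) + 1 then Real.sqrt (S (j + 1 + 1) / 2) else 0)
          = -Real.sqrt (S (j + 1) / 2) := if_pos rfl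
      have hne' : j - 1 ≠ j + 1 := fun h => hne h.symm
      have hj1 : j = (j - 1) + 1 := by ring
      have hA2 : (if j - 1 = j + 1 then -Real.sqrt (S (j + 1) / 2)
          else if j = (j - 1) + 1 then Real.sqrt (S ((j - 1) + 1) / 2) else 0)
          = Real.sqrt (S j / 2) := by
        rw [if_neg hne', if_pos hj1, show (j - 1) + 1 = j by ring]
      rw [hA1, hA2, neg_sq, Real.sq_sqrt (by linarith [hSnn (j + 1)]),
        Real.sq_sqrt (by linarith [hSnn j])]
      have := hS j
      linarith
    · intro p _ hp
      beta_reduce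
      rw [if_neg ?_, if_neg ?_]
      · norm_num
      · intro h
        exact hp.2 (by rw [h]; ring)
      · exact hp.1
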